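/- For every n' ≥ 1 and 0 ≤ n ≤ n', γ^{ours}_{n,n'} ≼ γ^{serra}_{n,n'}; that is, for every J ∈ ℕ, Σ_{j≥J} γ^{ours}_{n,n'}(j) ≤ Σ_{j≥J, n'−n ≤ j ≤ n'} binomial(n', j). -/

import Mathlib

open scoped Classical

noncomputable section

/-- Tail sum `Σ_{j ≥ J} v j` of a finitely supported histogram `v : ℕ →₀ ℕ`. -/
def tailSum (v : ℕ →₀ ℕ) (J : ℕ) : ℕ :=
  ∑ j ∈ v.support.filter (fun j => J ≤ j), v j

/-- Order relation on histograms: `v ≼ w` iff every tail sum of `v` is at most that of `w`. -/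
def HistLE (v w : ℕ →₀ ℕ) : Prop :=
  ∀ J : ℕ, tailSum v J ≤ tailSum w J

/-- Downward move: `dm v 0 = 0` and `dm v (i+1) = v i`. -/
def dm (v : ℕ →₀ ℕ) : ℕ →₀ ℕ :=
  Finsupp.embDomain ⟨Nat.succ, Nat.succ_injective⟩ v

/-- Clipping `cl_k`: keeps values below `k`, puts the tail sum at `k`, zero above `k`. -/
def clip (k : ℕ) (v : ℕ →₀ ℕ) : ℕ →₀ ℕ :=
  Finsupp.onFinset (Finset.range (k + 1))
    (fun i => if i < k then v i else if i = k then tailSum v k else 0)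
    (by
      intro a ha
      simp only [Finset.mem_range]
      by_contra hc
      push_neg at hc
      have h1 : ¬ a < k := by omega
      have h2 : a ≠ k := by omega
      simp [h1, h2] at ha)

/-- The histogram `γ_{1,n'}`: value 1 at `n'`, value 2 at `⌈n'/2⌉, …, n'-1`,
value `n' % 2` at `⌈n'/2⌉ - 1`, and 0 elsewhere. -/
def gammaOne (n' : ℕ) : ℕ →₀ ℕ :=
  Finsupp.onFinset (Finset.range (n' + 1))
    (fun i =>
      if i = n' then 1
      else if (n' + 1) / 2 ≤ i ∧ i < n' then 2
      else if i + 1 = (n' + 1) / 2 then n' % 2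
      else 0)
    (by
      intro a ha
      simp only [Finset.mem_range]
      by_contra hc
      push_neg at hc
      have h1 : a ≠ n' := by omega
      have h2 : ¬ ((n' + 1) / 2 ≤ a ∧ a < n') := by omega
      have h3 : a + 1 ≠ (n' + 1) / 2 := by omega
      simp [h1, h2, h3] at ha)

/-- Auxiliary column-major definition of `γ^{ours}`: `gammaOursAux n' n = γ^{ours}_{n,n'}`,
with the convention `γ_{n,n'} = γ_{n',n'}` for `n > n'` built in via the `min`s. -/
def gammaOursAux : ℕ → ℕ → (ℕ →₀ ℕ)
  | _, 0 => Finsupp.single 0 1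
  | n', 1 => gammaOne n'
  | 0, _ + 2 => 0
  | 1, _ + 2 => gammaOne 1
  | n' + 1, nn + 2 =>
      gammaOursAux n' (min (nn + 1) n') + dm (gammaOursAux n' (min (nn + 2) n'))

/-- `γ^{ours}_{n,n'}`. -/
def gammaOurs (n n' : ℕ) : ℕ →₀ ℕ := gammaOursAux n' n

/-- `γ^{serra}_{n,n'}`: `i ↦ binomial(n', i)` for `n' - n ≤ i ≤ n'`, and 0 otherwise. -/
def gammaSerra (n n' : ℕ) : ℕ →₀ ℕ :=
  Finsupp.onFinset (Finset.range (n' + 1))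
    (fun i => if n' - n ≤ i ∧ i ≤ n' then Nat.choose n' i else 0)
    (by
      intro a ha
      simp only [Finset.mem_range]
      by_contra hc
      push_neg at hc
      have h1 : ¬ (n' - n ≤ a ∧ a ≤ n') := by omega
      exact ha (by rw [if_neg h1]))


/-! ### Auxiliary lemmas -/

lemma tailSum_eq_of_subset (v : ℕ →₀ ℕ) (s : Finset ℕ) (hs : v.support ⊆ s) (J : ℕ) :
    tailSum v J = ∑ j ∈ s.filter (fun j => J ≤ j), v j := by
  unfold tailSum
  apply Finset.sum_subset
  · exact Finset.filter_subset_filter _ hs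
  · intro x hx hnx
    by_contra h
    exact hnx (Finset.mem_filter.mpr
      ⟨Finsupp.mem_support_iff.mpr h, (Finset.mem_filter.mp hx).2⟩)

lemma filter_range_eq_Icc (N J : ℕ) :
    (Finset.range (N + 1)).filter (fun j => J ≤ j) = Finset.Icc J N := by
  ext j
  simp only [Finset.mem_filter, Finset.mem_range, Finset.mem_Icc]
  omega

lemma tailSum_eq_Icc (v : ℕ →₀ ℕ) (N J : ℕ) (h : v.support ⊆ Finset.range (N + 1)) :
    tailSum v J = ∑ j ∈ Finset.Icc J N, v j := by
  rw [tailSum_eq_of_subset v _ h J, filter_range_eq_Icc]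

lemma tailSum_add (v w : ℕ →₀ ℕ) (J : ℕ) :
    tailSum (v + w) J = tailSum v J + tailSum w J := by
  have hv : v.support ⊆ v.support ∪ w.support := Finset.subset_union_left
  have hw : w.support ⊆ v.support ∪ w.support := Finset.subset_union_right
  have hvw : (v + w).support ⊆ v.support ∪ w.support := Finsupp.support_add
  rw [tailSum_eq_of_subset _ _ hvw J, tailSum_eq_of_subset _ _ hv J,
    tailSum_eq_of_subset _ _ hw J, ← Finset.sum_add_distrib]
  exact Finset.sum_congr rfl fun j _ => Finsupp.add_apply v w j

lemma tailSum_dm (v : ℕ →₀ ℕ) (J : ℕ) :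
    tailSum (dm v) J = tailSum v (J - 1) := by
  unfold dm tailSum
  rw [Finsupp.support_embDomain, Finset.filter_map, Finset.sum_map]
  have : ∀ i, (Finsupp.embDomain ⟨Nat.succ, Nat.succ_injective⟩ v)
      ((⟨Nat.succ, Nat.succ_injective⟩ : ℕ ↪ ℕ) i) = v i :=
    fun i => Finsupp.embDomain_apply_self _ v i
  rw [Finset.sum_congr rfl (fun i _ => this i)]
  apply Finset.sum_congr _ (fun _ _ => rfl)
  apply Finset.filter_congr
  intro j _
  simp only [Function.comp, Function.Embedding.coeFn_mk, Nat.succ_eq_add_one,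
    eq_iff_iff]
  omega

lemma gammaSerra_support (n n' : ℕ) :
    (gammaSerra n n').support ⊆ Finset.range (n' + 1) :=
  Finsupp.support_onFinset_subset

lemma gammaSerra_apply (n n' i : ℕ) :
    gammaSerra n n' i = if n' - n ≤ i ∧ i ≤ n' then Nat.choose n' i else 0 := rfl

lemma tailSum_serra (n n' J : ℕ) :
    tailSum (gammaSerra n n') J = ∑ j ∈ Finset.Icc (max J (n' - n)) n', Nat.choose n' j := by
  rw [tailSum_eq_Icc _ n' J (gammaSerra_support n n')]
  have h1 : ∀ j ∈ Finset.Icc J n',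
      gammaSerra n n' j = if n' - n ≤ j then Nat.choose n' j else 0 := by
    intro j hj
    rw [gammaSerra_apply]
    have := (Finset.mem_Icc.mp hj).2
    by_cases h : n' - n ≤ j <;> simp [h, this]
  rw [Finset.sum_congr rfl h1, ← Finset.sum_filter]
  apply Finset.sum_congr _ (fun _ _ => rfl)
  ext j
  simp only [Finset.mem_filter, Finset.mem_Icc, max_le_iff]
  omega

-- Pascal recursion for interval sums of binomial coefficients.
lemma sum_Icc_choose_succ (m a : ℕ) (ha : a ≤ m + 1) :
    ∑ j ∈ Finset.Icc a (m + 1), Nat.choose (m + 1) j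
      = ∑ j ∈ Finset.Icc a m, Nat.choose m j
        + ∑ j ∈ Finset.Icc (a - 1) m, Nat.choose m j := by
  rcases a with _ | b
  · have h0 : ∀ k : ℕ, Finset.Icc 0 k = Finset.range (k + 1) := by
      intro k; ext j
      simp only [Finset.mem_Icc, Finset.mem_range]; omega
    simp only [h0, Nat.zero_sub, Nat.sum_range_choose]
    ring
  · have hmap : Finset.Icc (b + 1) (m + 1)
        = (Finset.Icc b m).map (addRightEmbedding 1) := by
      rw [Finset.map_add_right_Icc]
    rw [hmap, Finset.sum_map]
    have hpt : ∀ i ∈ Finset.Icc b m,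
        Nat.choose (m + 1) (addRightEmbedding 1 i)
          = Nat.choose m i + Nat.choose m (i + 1) := by
      intro i _
      simp [addRightEmbedding, Nat.choose_succ_succ']
    rw [Finset.sum_congr rfl hpt, Finset.sum_add_distrib]
    have h3 : ∑ i ∈ Finset.Icc b m, Nat.choose m (i + 1)
        = ∑ j ∈ Finset.Icc (b + 1) m, Nat.choose m j := by
      have : ∑ j ∈ Finset.Icc (b + 1) (m + 1), Nat.choose m j
          = ∑ i ∈ Finset.Icc b m, Nat.choose m (i + 1) := by
        rw [hmap, Finset.sum_map]
        apply Finset.sum_congr rfl; intro i _; simp [addRightEmbedding]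
      rw [← this, Finset.sum_Icc_succ_top (by omega : b + 1 ≤ m + 1),
        Nat.choose_succ_self, add_zero]
    rw [h3]
    simp only [Nat.add_sub_cancel]
    ring

/-- The Serra tail sums satisfy the same recursion as `γ^{ours}`. -/
lemma tailSum_serra_rec (n n' J : ℕ) (hn : 1 ≤ n) (hn' : n ≤ n') :
    tailSum (gammaSerra n n') J
      = tailSum (gammaSerra (n - 1) (n' - 1)) J
        + tailSum (gammaSerra (min n (n' - 1)) (n' - 1)) (J - 1) := by
  obtain ⟨m, rfl⟩ : ∃ m, n' = m + 1 := ⟨n' - 1, by omega⟩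
  simp only [tailSum_serra, Nat.add_sub_cancel]
  by_cases hJ : J ≤ m + 1
  · have ha : max J (m + 1 - n) ≤ m + 1 := by omega
    rw [sum_Icc_choose_succ m _ ha]
    congr 2
    · congr 1; omega
    · congr 1; omega
  · have e1 : Finset.Icc (max J (m + 1 - n)) (m + 1) = ∅ := by
      rw [Finset.Icc_eq_empty_iff]; omega
    have e2 : Finset.Icc (max J (m - (n - 1))) m = ∅ := by
      rw [Finset.Icc_eq_empty_iff]; omega
    have e3 : Finset.Icc (max (J - 1) (m - min n m)) m = ∅ := by
      rw [Finset.Icc_eq_empty_iff]; omega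
    rw [e1, e2, e3]; simp

lemma gammaOne_support (n' : ℕ) : (gammaOne n').support ⊆ Finset.range (n' + 1) :=
  Finsupp.support_onFinset_subset

lemma gammaOne_apply (n' i : ℕ) :
    gammaOne n' i = if i = n' then 1
      else if (n' + 1) / 2 ≤ i ∧ i < n' then 2
      else if i + 1 = (n' + 1) / 2 then n' % 2
      else 0 := rfl

lemma gammaOne_total (n' : ℕ) :
    ∑ j ∈ Finset.Icc 0 n', gammaOne n' j ≤ n' + 1 := by
  have h0 : Finset.Icc 0 n' = Finset.range (n' + 1) := by
    ext j; simp only [Finset.mem_Icc, Finset.mem_range]; omega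
  rw [h0]
  have hpt : ∀ j ∈ Finset.range (n' + 1),
      gammaOne n' j = (if j = n' then 1 else 0)
        + (if (n' + 1) / 2 ≤ j ∧ j < n' then 2 else 0)
        + (if j + 1 = (n' + 1) / 2 then n' % 2 else 0) := by
    intro j _
    rw [gammaOne_apply]
    split_ifs <;> omega
  rw [Finset.sum_congr rfl hpt, Finset.sum_add_distrib, Finset.sum_add_distrib]
  have s1 : ∑ j ∈ Finset.range (n' + 1), (if j = n' then 1 else 0) = 1 := by
    rw [Finset.sum_ite_eq' (Finset.range (n' + 1)) n' (fun _ => 1)]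
    simp
  have s2 : ∑ j ∈ Finset.range (n' + 1), (if (n' + 1) / 2 ≤ j ∧ j < n' then 2 else 0)
      ≤ 2 * (n' - (n' + 1) / 2) := by
    rw [← Finset.sum_filter]
    have : (Finset.range (n' + 1)).filter (fun j => (n' + 1) / 2 ≤ j ∧ j < n')
        = Finset.Ico ((n' + 1) / 2) n' := by
      ext j
      simp only [Finset.mem_filter, Finset.mem_range, Finset.mem_Ico]
      omega
    rw [this, Finset.sum_const, Nat.card_Ico, smul_eq_mul]
    omega
  have s3 : ∑ j ∈ Finset.range (n' + 1), (if j + 1 = (n' + 1) / 2 then n' % 2 else 0)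
      ≤ n' % 2 := by
    rw [← Finset.sum_filter]
    have hsub : (Finset.range (n' + 1)).filter (fun j => j + 1 = (n' + 1) / 2)
        ⊆ {(n' + 1) / 2 - 1} := by
      intro j hj
      simp only [Finset.mem_filter, Finset.mem_range] at hj
      simp only [Finset.mem_singleton]
      omega
    calc ∑ j ∈ (Finset.range (n' + 1)).filter (fun j => j + 1 = (n' + 1) / 2), n' % 2
        ≤ ∑ j ∈ ({(n' + 1) / 2 - 1} : Finset ℕ), n' % 2 :=
          Finset.sum_le_sum_of_subset hsub
      _ = n' % 2 := by simp
  omega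

lemma gammaOne_le_serra (n' : ℕ) (hn' : 1 ≤ n') :
    HistLE (gammaOne n') (gammaSerra 1 n') := by
  intro J
  rw [tailSum_eq_Icc _ n' J (gammaOne_support n'), tailSum_serra]
  rcases Nat.lt_or_ge n' J with hJ | hJ
  · have e1 : Finset.Icc J n' = ∅ := by rw [Finset.Icc_eq_empty_iff]; omega
    rw [e1]; simp
  · rcases Nat.eq_or_lt_of_le hJ with hJe | hJlt
    · subst hJe
      have hmax : max J (J - 1) = J := by omega
      rw [hmax, Finset.Icc_self, Finset.sum_singleton, Finset.sum_singleton,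
        gammaOne_apply, Nat.choose_self]
      simp
    · -- J ≤ n' - 1
      have hmax : max J (n' - 1) = n' - 1 := by omega
      rw [hmax]
      have hrhs : ∑ j ∈ Finset.Icc (n' - 1) n', Nat.choose n' j = n' + 1 := by
        obtain ⟨m, rfl⟩ : ∃ m, n' = m + 1 := ⟨n' - 1, by omega⟩
        rw [Nat.add_sub_cancel, Finset.sum_Icc_succ_top (by omega : m ≤ m + 1),
          Finset.Icc_self, Finset.sum_singleton, Nat.choose_self,
          Nat.choose_succ_self_right]
      rw [hrhs]
      calc ∑ j ∈ Finset.Icc J n', gammaOne n' j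
          ≤ ∑ j ∈ Finset.Icc 0 n', gammaOne n' j :=
            Finset.sum_le_sum_of_subset (Finset.Icc_subset_Icc_left (by omega))
        _ ≤ n' + 1 := gammaOne_total n'

lemma gammaZero_le_serra (n' : ℕ) : HistLE (gammaOurs 0 n') (gammaSerra 0 n') := by
  intro J
  have h : gammaOurs 0 n' = Finsupp.single 0 1 := by
    rw [gammaOurs, gammaOursAux]
  rw [h]
  have hsupp : (Finsupp.single 0 1 : ℕ →₀ ℕ).support ⊆ Finset.range (0 + 1) := by
    rw [Finsupp.support_single_ne_zero 0 (by norm_num)]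
    simp
  rw [tailSum_eq_Icc _ 0 J hsupp, tailSum_serra]
  rcases Nat.eq_zero_or_pos J with rfl | hJ
  · have : max 0 (n' - 0) = n' := by omega
    rw [this, Finset.Icc_self, Finset.Icc_self, Finset.sum_singleton,
      Finset.sum_singleton, Nat.choose_self]
    simp
  · have e1 : Finset.Icc J 0 = ∅ := by rw [Finset.Icc_eq_empty_iff]; omega
    rw [e1]; simp

lemma gammaOursAux_rec (k nn : ℕ) :
    gammaOursAux (k + 2) (nn + 2)
      = gammaOursAux (k + 1) (min (nn + 1) (k + 1))
        + dm (gammaOursAux (k + 1) (min (nn + 2) (k + 1))) := by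
  rw [gammaOursAux]
  exact fun h => Nat.noConfusion h

/-- `γ^{ours}_{n,n'} ≼ γ^{serra}_{n,n'}` for every `n' ≥ 1` and `0 ≤ n ≤ n'`. -/
theorem statement9 :
    ∀ n' : ℕ, 1 ≤ n' → ∀ n : ℕ, n ≤ n' → HistLE (gammaOurs n n') (gammaSerra n n') := by
  intro n'
  induction n' with
  | zero => omega
  | succ m ih =>
    intro _ n hn
    match n, hn with
    | 0, _ => exact gammaZero_le_serra (m + 1)
    | 1, _ =>
      have h : gammaOurs 1 (m + 1) = gammaOne (m + 1) := by
        rw [gammaOurs, gammaOursAux]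
      rw [h]
      exact gammaOne_le_serra (m + 1) (by omega)
    | (nn + 2), hn =>
      intro J
      have hm : 1 ≤ m := by omega
      obtain ⟨k, rfl⟩ : ∃ k, m = k + 1 := ⟨m - 1, by omega⟩
      have hrec : gammaOurs (nn + 2) (k + 1 + 1)
          = gammaOursAux (k + 1) (min (nn + 1) (k + 1))
            + dm (gammaOursAux (k + 1) (min (nn + 2) (k + 1))) :=
        gammaOursAux_rec k nn
      rw [hrec, tailSum_add, tailSum_dm]
      have h1 : min (nn + 1) (k + 1) = nn + 1 := by omega
      rw [h1]
      have ih1 : tailSum (gammaOursAux (k + 1) (nn + 1)) J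
          ≤ tailSum (gammaSerra (nn + 1) (k + 1)) J := ih hm (nn + 1) (by omega) J
      have ih2 : tailSum (gammaOursAux (k + 1) (min (nn + 2) (k + 1))) (J - 1)
          ≤ tailSum (gammaSerra (min (nn + 2) (k + 1)) (k + 1)) (J - 1) :=
        ih hm (min (nn + 2) (k + 1)) (by omega) (J - 1)
      have hser := tailSum_serra_rec (nn + 2) (k + 1 + 1) J (by omega) (by omega)
      simp only [Nat.add_sub_cancel, show nn + 2 - 1 = nn + 1 from rfl] at hser
      rw [hser]
      omega
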